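/- For every a > 0, b ∈ (0,1) and every x ∈ (0,1), the Cesàro averages of the orbit of x converge to b: lim_{n→∞} (1/n)·Σ_{k=0}^{n-1} f_{a,b}^k(x) = b. -/

import Mathlib

/-- The map `f_{a,b}(x) = x / (x + (1-x) * exp (a (x - b)))`. -/
noncomputable def chaosMap (a b : ℝ) : ℝ → ℝ :=
  fun x => x / (x + (1 - x) * Real.exp (a * (x - b)))

namespace ChaosAux

lemma maps_to (a b : ℝ) {x : ℝ} (hx : x ∈ Set.Ioo (0:ℝ) 1) :
    chaosMap a b x ∈ Set.Ioo (0:ℝ) 1 := by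
  obtain ⟨h0, h1⟩ := hx
  have he : 0 < Real.exp (a * (x - b)) := Real.exp_pos _
  have hD : 0 < x + (1 - x) * Real.exp (a * (x - b)) := by nlinarith
  constructor
  · exact div_pos h0 hD
  · rw [chaosMap, div_lt_one hD]; nlinarith

lemma logit_step (a b : ℝ) {x : ℝ} (hx : x ∈ Set.Ioo (0:ℝ) 1) :
    Real.log (chaosMap a b x / (1 - chaosMap a b x))
      = Real.log (x / (1 - x)) - a * (x - b) := by
  obtain ⟨h0, h1⟩ := hx
  have he : 0 < Real.exp (a * (x - b)) := Real.exp_pos _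
  have hD : 0 < x + (1 - x) * Real.exp (a * (x - b)) := by nlinarith
  have h1x : (0:ℝ) < 1 - x := by linarith
  have key : chaosMap a b x / (1 - chaosMap a b x)
      = x / ((1 - x) * Real.exp (a * (x - b))) := by
    have h2 : 1 - x / (x + (1 - x) * Real.exp (a * (x - b)))
        = ((1 - x) * Real.exp (a * (x - b))) / (x + (1 - x) * Real.exp (a * (x - b))) := by
      field_simp
      ring
    simp only [chaosMap]
    rw [h2, div_div_div_cancel_right₀ hD.ne']
  rw [key, Real.log_div h0.ne' (by positivity), Real.log_mul h1x.ne' he.ne',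
    Real.log_exp, Real.log_div h0.ne' h1x.ne']
  ring

lemma logit_mono {x y : ℝ} (hx : x ∈ Set.Ioo (0:ℝ) 1) (hy : y ∈ Set.Ioo (0:ℝ) 1)
    (hxy : x ≤ y) : Real.log (x / (1 - x)) ≤ Real.log (y / (1 - y)) := by
  obtain ⟨hx0, hx1⟩ := hx
  obtain ⟨hy0, hy1⟩ := hy
  have h1x : (0:ℝ) < 1 - x := by linarith
  have h1y : (0:ℝ) < 1 - y := by linarith
  apply Real.log_le_log (by positivity)
  rw [div_le_div_iff₀ h1x h1y]
  nlinarith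

end ChaosAux

/-- For every `a > 0`, `b ∈ (0,1)` and `x ∈ (0,1)`, the Cesàro averages of the
orbit of `x` under `f_{a,b}` converge to `b`. -/
theorem stmt_2 (a b : ℝ) (ha : 0 < a) (hb : b ∈ Set.Ioo (0 : ℝ) 1)
    (x : ℝ) (hx : x ∈ Set.Ioo (0 : ℝ) 1) :
    Filter.Tendsto (fun n : ℕ => (∑ k ∈ Finset.range n, (chaosMap a b)^[k] x) / n)
      Filter.atTop (nhds b) := by
  set F := chaosMap a b with hF
  set o : ℕ → ℝ := fun n => F^[n] x with ho
  have horb : ∀ n, o n ∈ Set.Ioo (0:ℝ) 1 := by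
    intro n
    induction n with
    | zero => simpa [ho] using hx
    | succ n ih =>
      have : o (n+1) = F (o n) := by
        simp only [ho, Function.iterate_succ_apply']
      rw [this]
      exact ChaosAux.maps_to a b ih
  set L : ℕ → ℝ := fun n => Real.log (o n / (1 - o n)) with hLdef
  have hL : ∀ n, L (n+1) = L n - a * (o n - b) := by
    intro n
    have h1 : o (n+1) = F (o n) := by
      simp only [ho, Function.iterate_succ_apply']
    simp only [hLdef, h1]
    exact ChaosAux.logit_step a b (horb n)
  -- telescoping sum
  have hsum : ∀ n : ℕ, a * ∑ k ∈ Finset.range n, o k = n * (a * b) + (L 0 - L n) := by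
    intro n
    induction n with
    | zero => simp
    | succ n ih =>
      rw [Finset.sum_range_succ, mul_add, ih]
      have h := hL n
      push_cast
      nlinarith [h]
  -- boundedness of L
  set Lb : ℝ := Real.log (b / (1 - b)) with hLb
  have hupper : ∀ n, L n ≤ max (L 0) Lb + a := by
    intro n
    induction n with
    | zero => have := le_max_left (L 0) Lb; linarith
    | succ n ih =>
      rcases le_or_gt (o n) b with hc | hc
      · have h1 : L n ≤ Lb := ChaosAux.logit_mono (horb n) hb hc
        have h2 := hL n
        have h3 : Lb ≤ max (L 0) Lb := le_max_right _ _
        have hb1 : b < 1 := hb.2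
        have ho0 : 0 < o n := (horb n).1
        nlinarith [h2]
      · have h2 := hL n
        nlinarith [h2]
  have hlower : ∀ n, min (L 0) Lb - a ≤ L n := by
    intro n
    induction n with
    | zero => have := min_le_left (L 0) Lb; linarith
    | succ n ih =>
      rcases le_or_gt b (o n) with hc | hc
      · have h1 : Lb ≤ L n := ChaosAux.logit_mono hb (horb n) hc
        have h2 := hL n
        have h3 : min (L 0) Lb ≤ Lb := min_le_right _ _
        have hb0 : 0 < b := hb.1
        have ho1 : o n < 1 := (horb n).2
        nlinarith [h2]
      · have h2 := hL n
        nlinarith [h2]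
  -- uniform bound on |L 0 - L n|
  obtain ⟨K, hK⟩ : ∃ K : ℝ, ∀ n, |L 0 - L n| ≤ K := by
    refine ⟨|L 0| + (|L 0| + |Lb| + a), fun n => ?_⟩
    have h1 := hupper n
    have h2 := hlower n
    have h3 : L n ≤ |L 0| + |Lb| + a := by
      have := le_abs_self (L 0); have := le_abs_self Lb
      have := le_max_iff.mp (le_refl (max (L 0) Lb))
      rcases le_total (L 0) Lb with h | h
      · rw [max_eq_right h] at h1; linarith [abs_nonneg (L 0), le_abs_self Lb]
      · rw [max_eq_left h] at h1; linarith [abs_nonneg Lb, le_abs_self (L 0)]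
    have h4 : -(|L 0| + |Lb| + a) ≤ L n := by
      rcases le_total (L 0) Lb with h | h
      · rw [min_eq_left h] at h2; linarith [abs_nonneg Lb, neg_abs_le (L 0)]
      · rw [min_eq_right h] at h2; linarith [abs_nonneg (L 0), neg_abs_le Lb]
    rw [abs_sub_le_iff]
    constructor
    · linarith [le_abs_self (L 0)]
    · linarith [neg_abs_le (L 0)]
  have hK0 : 0 ≤ K := le_trans (abs_nonneg _) (hK 0)
  -- the error term tends to zero
  have herr : Filter.Tendsto (fun n : ℕ => (L 0 - L n) / (a * n)) Filter.atTop (nhds 0) := by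
    have hbd : ∀ n : ℕ, ‖(L 0 - L n) / (a * n)‖ ≤ (K / a) * (1 / n) := by
      intro n
      rcases Nat.eq_zero_or_pos n with rfl | hn
      · simp
      · have hn' : (0:ℝ) < n := by exact_mod_cast hn
        have hmul : (K / a) * (1 / (n:ℝ)) = K / (a * n) := by
          rw [div_mul_div_comm, mul_one]
        rw [Real.norm_eq_abs, abs_div, abs_of_pos (by positivity : (0:ℝ) < a * n), hmul]
        gcongr
        exact hK n
    have hlim : Filter.Tendsto (fun n : ℕ => (K / a) * (1 / n)) Filter.atTop (nhds 0) := by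
      have h1 : Filter.Tendsto (fun n : ℕ => (1:ℝ) / n) Filter.atTop (nhds 0) :=
        tendsto_one_div_atTop_nhds_zero_nat
      simpa using h1.const_mul (K / a)
    exact squeeze_zero_norm hbd hlim
  -- conclude
  have heq : ∀ᶠ n : ℕ in Filter.atTop,
      b + (L 0 - L n) / (a * n) = (∑ k ∈ Finset.range n, F^[k] x) / n := by
    filter_upwards [Filter.eventually_ge_atTop 1] with n hn
    have hn' : (0:ℝ) < n := by exact_mod_cast hn
    have h := hsum n
    have hsum' : (∑ k ∈ Finset.range n, o k) = (n * (a * b) + (L 0 - L n)) / a := by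
      rw [eq_div_iff ha.ne']; linarith [h]
    simp only [ho] at hsum'
    rw [hsum']
    field_simp
  have : Filter.Tendsto (fun n : ℕ => b + (L 0 - L n) / (a * n)) Filter.atTop (nhds (b + 0)) :=
    (tendsto_const_nhds).add herr
  rw [add_zero] at this
  exact this.congr' heq
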